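/- Let R > 0 and let ψ : ℂ → ℂ be holomorphic and injective on the open ball B(0,R) ⊆ ℂ. Then there exists a function H : ℂ × ℂ → ℂ which is holomorphic (jointly analytic) on B(0,R) × B(0,R) ⊆ ℂ² such that H(z,w) = (w − z)/(ψ(w) − ψ(z)) whenever z, w ∈ B(0,R) and z ≠ w, and H(z,z) = 1/ψ'(z) for every z ∈ B(0,R). (Since ψ is injective and holomorphic, ψ(w) ≠ ψ(z) for z ≠ w and ψ'(z) ≠ 0, so these expressions are well defined; the point is that the singularity on the diagonal w = z is removable.) -/

import Mathlib

open Complex Metric Set Filter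
open scoped Topology ENNReal NNReal

/-- Product of `if i < j then x else y` over `Fin n`. -/
private lemma prod_ite_lt_aux (n j : ℕ) (hj : j ≤ n) (x y : ℂ) :
    (∏ i : Fin n, (if (i : ℕ) < j then x else y)) = x ^ j * y ^ (n - j) := by
  rw [Fin.prod_univ_eq_prod_range (fun i => if i < j then x else y) n,
    ← Finset.prod_range_mul_prod_Ico _ hj]
  have h1 : (∏ i ∈ Finset.range j, (if i < j then x else y)) = x ^ j := by
    rw [Finset.prod_congr rfl (fun i hi => if_pos (Finset.mem_range.mp hi)),
      Finset.prod_const, Finset.card_range]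
  have h2 : (∏ i ∈ Finset.Ico j n, (if i < j then x else y)) = y ^ (n - j) := by
    rw [Finset.prod_congr rfl (fun i hi => if_neg (not_lt.2 (Finset.mem_Ico.mp hi).1)),
      Finset.prod_const, Nat.card_Ico]
  rw [h1, h2]

/-- An injective holomorphic function on the ball has nonvanishing derivative. -/
private lemma deriv_ne_zero_of_injOn_aux (R : ℝ) (hR : 0 < R) (ψ : ℂ → ℂ)
    (hψ : AnalyticOnNhd ℂ ψ (Metric.ball (0 : ℂ) R))
    (hinj : Set.InjOn ψ (Metric.ball (0 : ℂ) R)) {a : ℂ} (ha : a ∈ Metric.ball (0 : ℂ) R) :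
    deriv ψ a ≠ 0 := by
  intro h0
  set f : ℂ → ℂ := fun z => ψ z - ψ a with hf
  have hfa : AnalyticAt ℂ f a := (hψ a ha).sub analyticAt_const
  -- two distinct points of the ball
  have h0m : (0 : ℂ) ∈ Metric.ball (0 : ℂ) R := by simpa using hR
  have h1m : ((R / 2 : ℝ) : ℂ) ∈ Metric.ball (0 : ℂ) R := by
    simp only [mem_ball_zero_iff, Complex.norm_real, Real.norm_eq_abs]
    rw [abs_of_pos (by linarith)]; linarith
  have hRC : ((R / 2 : ℝ) : ℂ) ≠ 0 := by
    simp only [ne_eq, Complex.ofReal_eq_zero]; intro h; linarith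
  -- f is not eventually zero
  have h_ne : ¬∀ᶠ z in 𝓝 a, f z = 0 := by
    intro h
    have heq : Set.EqOn f 0 (Metric.ball (0 : ℂ) R) :=
      AnalyticOnNhd.eqOn_zero_of_preconnected_of_eventuallyEq_zero
        (fun z hz => (hψ z hz).sub analyticAt_const)
        (convex_ball (0 : ℂ) R).isPreconnected ha h
    have e0 : ψ 0 = ψ a := by have := heq h0m; simpa [hf, sub_eq_zero] using this
    have e1 : ψ ((R / 2 : ℝ) : ℂ) = ψ a := by have := heq h1m; simpa [hf, sub_eq_zero] using this
    exact hRC (hinj h1m h0m (e1.trans e0.symm))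
  obtain ⟨n, g, hg, hg0, hfg⟩ := hfa.exists_eventuallyEq_pow_smul_nonzero_iff.mpr h_ne
  -- n ≥ 2
  have hn0 : n ≠ 0 := by
    intro h
    apply hg0
    have := hfg.self_of_nhds
    simp [hf, h] at this
    exact this.symm
  have hn1 : n ≠ 1 := by
    intro h
    have hder : HasDerivAt (fun z => (z - a) ^ 1 • g z) (g a) a := by
      simp only [pow_one, smul_eq_mul]
      have := ((hasDerivAt_id a).sub_const a).mul hg.differentiableAt.hasDerivAt
      simp at this; exact this
    have h1 : deriv f a = g a := by
      have : deriv f a = deriv (fun z => (z - a) ^ 1 • g z) a := by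
        apply Filter.EventuallyEq.deriv_eq
        simpa [h, Filter.EventuallyEq] using hfg
      rw [this, hder.deriv]
    have h2 : deriv f a = deriv ψ a := by
      simp only [hf]
      exact deriv_sub_const (ψ a)
    exact hg0 (by rw [← h1, h2, h0])
  have hn2 : 2 ≤ n := by omega
  have hn0' : (n : ℂ) ≠ 0 := Nat.cast_ne_zero.mpr hn0
  -- n-th root of g a
  set b : ℂ := (g a) ^ ((n : ℂ)⁻¹) with hbdef
  have hbn : b ^ n = g a := Complex.cpow_nat_inv_pow _ hn0
  have hb : b ≠ 0 := by
    intro h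
    exact hg0 (by rw [← hbn, h, zero_pow hn0])
  -- the n-th root function φ
  set φ : ℂ → ℂ := fun z => (b * (z - a)) * Complex.exp (Complex.log (g z / g a) / n) with hφdef
  have hga : AnalyticAt ℂ (fun z => g z / g a) a := hg.div analyticAt_const hg0
  have hlog : AnalyticAt ℂ (fun z => Complex.log (g z / g a)) a :=
    hga.clog (by simp [div_self hg0, Complex.one_mem_slitPlane])
  have hexp : AnalyticAt ℂ (fun z => Complex.exp (Complex.log (g z / g a) / n)) a :=
    (hlog.div analyticAt_const hn0').cexp
  have hφ_an : AnalyticAt ℂ φ a :=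
    (analyticAt_const.mul (analyticAt_id.sub analyticAt_const)).mul hexp
  have hφa : φ a = 0 := by simp [hφdef]
  -- derivative of φ at a is b
  have hφd : HasDerivAt φ b a := by
    have hu : HasDerivAt (fun z => b * (z - a)) b a := by
      simpa using ((hasDerivAt_id a).sub_const a).const_mul b
    have hv : HasDerivAt (fun z => Complex.exp (Complex.log (g z / g a) / n))
        (deriv (fun z => Complex.exp (Complex.log (g z / g a) / n)) a) a :=
      hexp.differentiableAt.hasDerivAt
    have := hu.mul hv
    have hva : Complex.exp (Complex.log (g a / g a) / n) = 1 := by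
      simp [div_self hg0, Complex.log_one]
    simp [hva] at this; exact this
  have hstrict : HasStrictDerivAt φ b a := by
    have := (hφ_an.contDiffAt (n := 1)).hasStrictDerivAt one_ne_zero
    rwa [hφd.deriv] at this
  have hmap : Filter.map φ (𝓝 a) = 𝓝 (0 : ℂ) := by
    have := hstrict.map_nhds_eq hb
    rwa [hφa] at this
  -- eventual factorization ψ z - ψ a = φ z ^ n
  have hev : ∀ᶠ z in 𝓝 a, ψ z - ψ a = φ z ^ n := by
    filter_upwards [hfg, hg.continuousAt.eventually_ne hg0] with z h1 h2
    have hgz : g z / g a ≠ 0 := div_ne_zero h2 hg0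
    have hexp_pow : Complex.exp (Complex.log (g z / g a) / n) ^ n = g z / g a := by
      rw [← Complex.exp_nat_mul, mul_div_cancel₀ _ hn0', Complex.exp_log hgz]
    have : φ z ^ n = (z - a) ^ n * g z := by
      rw [hφdef]
      rw [mul_pow, mul_pow, hbn, hexp_pow]
      field_simp
    rw [this]
    simpa [smul_eq_mul] using h1
  have hU : {z | (ψ z - ψ a = φ z ^ n) ∧ z ∈ Metric.ball (0 : ℂ) R} ∈ 𝓝 a := by
    apply Filter.inter_mem hev
    exact isOpen_ball.mem_nhds ha
  have himg : φ '' {z | (ψ z - ψ a = φ z ^ n) ∧ z ∈ Metric.ball (0 : ℂ) R} ∈ 𝓝 (0 : ℂ) := by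
    rw [← hmap]
    exact Filter.image_mem_map hU
  obtain ⟨δ, hδ, hsub⟩ := Metric.mem_nhds_iff.1 himg
  -- the root of unity
  set ζ : ℂ := Complex.exp ((2 * Real.pi / n : ℝ) * Complex.I) with hζdef
  have hζabs : ‖ζ‖ = 1 := Complex.norm_exp_ofReal_mul_I _
  have hζn : ζ ^ n = 1 := by
    rw [hζdef, ← Complex.exp_nat_mul]
    have : (n : ℂ) * (((2 * Real.pi / n : ℝ) : ℂ) * Complex.I) = 2 * (Real.pi : ℂ) * Complex.I := by
      push_cast
      field_simp
    rw [this, Complex.exp_two_pi_mul_I]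
  have hζ1 : ζ ≠ 1 := by
    intro h
    obtain ⟨k, hk⟩ := Complex.exp_eq_one_iff.1 (hζdef ▸ h)
    have hk' : ((2 * Real.pi / n : ℝ) : ℂ) = ((k * (2 * Real.pi) : ℝ) : ℂ) := by
      apply mul_right_cancel₀ Complex.I_ne_zero
      rw [hk]; push_cast; ring
    have hkr : 2 * Real.pi / n = k * (2 * Real.pi) := Complex.ofReal_inj.1 hk'
    have hpi : (0 : ℝ) < 2 * Real.pi := by positivity
    have hnr : (0 : ℝ) < n := by exact_mod_cast Nat.pos_of_ne_zero hn0
    have hinv : (1 : ℝ) / n = k := by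
      field_simp at hkr ⊢
      nlinarith [Real.pi_pos]
    have hkpos : (0 : ℝ) < k := by rw [← hinv]; positivity
    have hk1 : (1 : ℤ) ≤ k := by exact_mod_cast hkpos
    have hk1' : (1 : ℝ) ≤ (k : ℝ) := by exact_mod_cast hk1
    have hn2' : (2 : ℝ) ≤ n := by exact_mod_cast hn2
    have : (1 : ℝ) / n ≤ 1 / 2 := by
      apply one_div_le_one_div_of_le <;> linarith
    linarith [hinv ▸ hk1']
  -- find two distinct points with equal ψ values
  set v : ℂ := ((δ / 2 : ℝ) : ℂ) with hvdef
  have hv0 : v ≠ 0 := by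
    simp only [hvdef, ne_eq, Complex.ofReal_eq_zero]
    intro h; linarith
  have hvmem : v ∈ Metric.ball (0 : ℂ) δ := by
    simp only [mem_ball_zero_iff, hvdef, Complex.norm_real, Real.norm_eq_abs]
    rw [abs_of_pos (by linarith)]; linarith
  have hζvmem : ζ * v ∈ Metric.ball (0 : ℂ) δ := by
    simp only [mem_ball_zero_iff] at hvmem ⊢
    rw [norm_mul]
    have : ‖ζ‖ = 1 := hζabs
    rw [this, one_mul]
    exact hvmem
  obtain ⟨z₁, hz₁U, hz₁⟩ := hsub hvmem
  obtain ⟨z₂, hz₂U, hz₂⟩ := hsub hζvmem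
  have hψ12 : ψ z₁ = ψ z₂ := by
    have e1 : ψ z₁ - ψ a = v ^ n := by rw [hz₁U.1, hz₁]
    have e2 : ψ z₂ - ψ a = v ^ n := by
      rw [hz₂U.1, hz₂, mul_pow, hζn, one_mul]
    have := e1.trans e2.symm
    linear_combination this
  have hz12 : z₁ = z₂ := hinj hz₁U.2 hz₂U.2 hψ12
  apply hζ1
  have hveq : v = ζ * v := hz₁.symm.trans ((congrArg φ hz12).trans hz₂)
  have : ζ * v = 1 * v := by rw [one_mul]; exact hveq.symm
  exact mul_right_cancel₀ hv0 this

/-- The divided-difference function is analytic at diagonal points. -/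
private lemma diag_analytic_aux (R : ℝ) (ψ : ℂ → ℂ)
    (hψ : AnalyticOnNhd ℂ ψ (Metric.ball (0 : ℂ) R))
    {a : ℂ} (ha : a ∈ Metric.ball (0 : ℂ) R) :
    AnalyticAt ℂ (fun p : ℂ × ℂ =>
      if p.1 = p.2 then deriv ψ p.1 else (ψ p.2 - ψ p.1) / (p.2 - p.1)) (a, a) := by
  set G : ℂ × ℂ → ℂ := fun p =>
    if p.1 = p.2 then deriv ψ p.1 else (ψ p.2 - ψ p.1) / (p.2 - p.1) with hGdef
  obtain ⟨p, hpA⟩ := hψ a ha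
  obtain ⟨r0, hp⟩ := hpA
  have haR : ‖a‖ < R := mem_ball_zero_iff.1 ha
  -- choose a radius
  obtain ⟨r, hr0, hrlt⟩ :
      ∃ r : NNReal, 0 < (r : ℝ≥0∞) ∧ (r : ℝ≥0∞) < min r0 (ENNReal.ofReal (R - ‖a‖)) := by
    have hpos : (0 : ℝ≥0∞) < min r0 (ENNReal.ofReal (R - ‖a‖)) := by
      apply lt_min hp.r_pos
      rw [ENNReal.ofReal_pos]; linarith
    obtain ⟨r, h1, h2⟩ := ENNReal.lt_iff_exists_nnreal_btwn.1 hpos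
    exact ⟨r, h1, h2⟩
  have hrr0 : (r : ℝ≥0∞) < r0 := lt_of_lt_of_le hrlt (min_le_left _ _)
  have hrR : (r : ℝ) < R - ‖a‖ := by
    have := lt_of_lt_of_le hrlt (min_le_right _ _)
    rwa [← ENNReal.ofReal_coe_nnreal, ENNReal.ofReal_lt_ofReal_iff (by linarith)] at this
  have hr0' : (0 : ℝ) < r := by exact_mod_cast hr0
  have hrrad : (r : ℝ≥0∞) < p.radius := lt_of_lt_of_le hrr0 hp.r_le
  -- the two-variable series
  set P : FormalMultilinearSeries ℂ (ℂ × ℂ) ℂ := fun n =>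
    ∑ j ∈ Finset.range (n + 1), p.coeff (n + 1) •
      ((ContinuousMultilinearMap.mkPiAlgebra ℂ (Fin n) ℂ).compContinuousLinearMap
        (fun i => if (i : ℕ) < j then ContinuousLinearMap.fst ℂ ℂ ℂ
          else ContinuousLinearMap.snd ℂ ℂ ℂ)) with hPdef
  -- evaluation of P on constant vectors
  have hPapp : ∀ (n : ℕ) (v : ℂ × ℂ), (P n fun _ => v) =
      p.coeff (n + 1) * ∑ j ∈ Finset.range (n + 1), v.1 ^ j * v.2 ^ (n - j) := by
    intro n v
    rw [hPdef]
    rw [ContinuousMultilinearMap.sum_apply, Finset.mul_sum]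
    apply Finset.sum_congr rfl
    intro j hj
    have hj' : j ≤ n := Nat.lt_succ_iff.1 (Finset.mem_range.1 hj)
    rw [ContinuousMultilinearMap.smul_apply,
      ContinuousMultilinearMap.compContinuousLinearMap_apply,
      ContinuousMultilinearMap.mkPiAlgebra_apply]
    have : (∏ i : Fin n, (if (i : ℕ) < j then ContinuousLinearMap.fst ℂ ℂ ℂ
        else ContinuousLinearMap.snd ℂ ℂ ℂ) v) = v.1 ^ j * v.2 ^ (n - j) := by
      rw [← prod_ite_lt_aux n j hj' v.1 v.2]
      apply Finset.prod_congr rfl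
      intro i _
      by_cases h : (i : ℕ) < j <;> simp [h]
    rw [this, smul_eq_mul]
  -- norm bound for P
  have hPnorm : ∀ n : ℕ, ‖P n‖ ≤ (n + 1) * ‖p (n + 1)‖ := by
    intro n
    rw [hPdef]
    refine le_trans (norm_sum_le _ _) ?_
    have hterm : ∀ j ∈ Finset.range (n + 1),
        ‖p.coeff (n + 1) • ((ContinuousMultilinearMap.mkPiAlgebra ℂ (Fin n) ℂ).compContinuousLinearMap
          (fun i => if (i : ℕ) < j then ContinuousLinearMap.fst ℂ ℂ ℂ
            else ContinuousLinearMap.snd ℂ ℂ ℂ))‖ ≤ ‖p (n + 1)‖ := by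
      intro j _
      refine le_trans (ContinuousMultilinearMap.opNorm_smul_le _ _) ?_
      have h1 : ‖(ContinuousMultilinearMap.mkPiAlgebra ℂ (Fin n) ℂ).compContinuousLinearMap
          (fun i => if (i : ℕ) < j then ContinuousLinearMap.fst ℂ ℂ ℂ
            else ContinuousLinearMap.snd ℂ ℂ ℂ)‖ ≤ 1 := by
        refine le_trans (ContinuousMultilinearMap.norm_compContinuousLinearMap_le _ _) ?_
        rw [ContinuousMultilinearMap.norm_mkPiAlgebra, one_mul]
        refine le_trans (Finset.prod_le_one (fun i _ => norm_nonneg _) (fun i _ => ?_)) le_rfl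
        by_cases h : (i : ℕ) < j
        · simp only [h, if_true]
          exact ContinuousLinearMap.opNorm_le_bound _ zero_le_one
            (fun x => by simpa using norm_fst_le x)
        · simp only [h, if_false]
          exact ContinuousLinearMap.opNorm_le_bound _ zero_le_one
            (fun x => by simpa using norm_snd_le x)
      rw [FormalMultilinearSeries.norm_apply_eq_norm_coef]
      calc ‖p.coeff (n + 1)‖ * _ ≤ ‖p.coeff (n + 1)‖ * 1 :=
            mul_le_mul_of_nonneg_left h1 (norm_nonneg _)
        _ = ‖p.coeff (n + 1)‖ := mul_one _
    refine le_trans (Finset.sum_le_sum hterm) ?_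
    rw [Finset.sum_const, Finset.card_range, nsmul_eq_mul]
    push_cast
    exact le_rfl
  -- radius bound
  have hrP : (r : ℝ≥0∞) ≤ P.radius := by
    apply P.le_radius_of_summable
    obtain ⟨aa, haa, C, hC, hbound⟩ := p.norm_mul_pow_le_mul_pow_of_lt_radius hrrad
    have hsum : Summable (fun n : ℕ => (C * aa / r) * ((n + 1) * aa ^ n)) := by
      apply Summable.mul_left
      have h1 : Summable (fun n : ℕ => (n : ℝ) * aa ^ n) := by
        simpa using summable_pow_mul_geometric_of_norm_lt_one 1
          (by rw [Real.norm_eq_abs, abs_of_pos haa.1]; exact haa.2)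
      have h2 : Summable (fun n : ℕ => aa ^ n) :=
        summable_geometric_of_lt_one haa.1.le haa.2
      simpa [add_mul, one_mul] using h1.add h2
    apply Summable.of_nonneg_of_le (fun n => by positivity) _ hsum
    intro n
    have h1 : ‖P n‖ * (r : ℝ) ^ n ≤ ((n + 1) * ‖p (n + 1)‖) * (r : ℝ) ^ n :=
      mul_le_mul_of_nonneg_right (hPnorm n) (by positivity)
    have h2 : ‖p (n + 1)‖ * (r : ℝ) ^ (n + 1) ≤ C * aa ^ (n + 1) := hbound (n + 1)
    have h3 : ((n + 1) * ‖p (n + 1)‖) * (r : ℝ) ^ n ≤ (C * aa / r) * ((n + 1) * aa ^ n) := by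
      rw [div_mul_eq_mul_div, le_div_iff₀ hr0']
      calc ((n + 1) * ‖p (n + 1)‖) * (r : ℝ) ^ n * r
          = (n + 1) * (‖p (n + 1)‖ * (r : ℝ) ^ (n + 1)) := by ring
        _ ≤ (n + 1) * (C * aa ^ (n + 1)) := by
            apply mul_le_mul_of_nonneg_left h2 (by positivity)
        _ = C * aa * ((n + 1) * aa ^ n) := by ring
    exact le_trans h1 h3
  -- one-variable sums
  have hsum1 : ∀ z' : ℂ, ‖z'‖ < (r : ℝ) →
      HasSum (fun m : ℕ => p.coeff m * z' ^ m) (ψ (a + z')) := by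
    intro z' hz'
    have hmem : z' ∈ Metric.eball (0 : ℂ) r0 := by
      rw [EMetric.mem_ball, edist_zero_right]
      calc (‖z'‖₊ : ℝ≥0∞) < (r : ℝ≥0∞) := by
            rw [ENNReal.coe_lt_coe]; exact_mod_cast hz'
        _ < r0 := hrr0
    have := hp.hasSum hmem
    simpa [FormalMultilinearSeries.apply_eq_pow_smul_coeff, smul_eq_mul, mul_comm]
      using this
  -- key identity for the sum of the two-variable series
  have hkey : ∀ v : ℂ × ℂ, ‖v‖ < (r : ℝ) →
      (v.2 - v.1) * P.sum v = ψ (a + v.2) - ψ (a + v.1) := by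
    intro v hv
    have hv1 : ‖v.1‖ < (r : ℝ) := lt_of_le_of_lt (norm_fst_le v) hv
    have hv2 : ‖v.2‖ < (r : ℝ) := lt_of_le_of_lt (norm_snd_le v) hv
    have hmem : v ∈ Metric.eball (0 : ℂ × ℂ) P.radius := by
      rw [EMetric.mem_ball, edist_zero_right]
      calc (‖v‖₊ : ℝ≥0∞) < (r : ℝ≥0∞) := by
            rw [ENNReal.coe_lt_coe]; exact_mod_cast hv
        _ ≤ P.radius := hrP
    have hS : HasSum (fun n => P n fun _ => v) (P.sum v) := P.hasSum hmem
    have hS' : HasSum (fun n => (v.2 - v.1) * (P n fun _ => v)) ((v.2 - v.1) * P.sum v) :=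
      hS.mul_left _
    -- transform each term
    have hterm : ∀ n : ℕ, (v.2 - v.1) * (P n fun _ => v) =
        p.coeff (n + 1) * (v.2 ^ (n + 1) - v.1 ^ (n + 1)) := by
      intro n
      rw [hPapp]
      have hgeom : (∑ j ∈ Finset.range (n + 1), v.2 ^ j * v.1 ^ (n - j)) * (v.2 - v.1)
          = v.2 ^ (n + 1) - v.1 ^ (n + 1) := by
        have := geom_sum₂_mul v.2 v.1 (n + 1)
        simpa using this
      have hswap : (∑ j ∈ Finset.range (n + 1), v.1 ^ j * v.2 ^ (n - j))
          = ∑ j ∈ Finset.range (n + 1), v.2 ^ j * v.1 ^ (n - j) := by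
        rw [← Finset.sum_range_reflect]
        apply Finset.sum_congr rfl
        intro j hj
        have hj' : j ≤ n := Nat.lt_succ_iff.1 (Finset.mem_range.1 hj)
        have : n + 1 - 1 - j = n - j := by omega
        rw [this]
        have : n - (n - j) = j := by omega
        rw [this, mul_comm]
      rw [hswap]
      calc (v.2 - v.1) * (p.coeff (n + 1) * ∑ j ∈ Finset.range (n + 1), v.2 ^ j * v.1 ^ (n - j))
          = p.coeff (n + 1) * ((∑ j ∈ Finset.range (n + 1), v.2 ^ j * v.1 ^ (n - j)) * (v.2 - v.1)) := by
            ring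
        _ = p.coeff (n + 1) * (v.2 ^ (n + 1) - v.1 ^ (n + 1)) := by rw [hgeom]
    -- the target sum
    have htot : HasSum (fun m : ℕ => p.coeff m * v.2 ^ m - p.coeff m * v.1 ^ m)
        (ψ (a + v.2) - ψ (a + v.1)) := (hsum1 v.2 hv2).sub (hsum1 v.1 hv1)
    have hshift : HasSum (fun n : ℕ => p.coeff (n + 1) * (v.2 ^ (n + 1) - v.1 ^ (n + 1)))
        (ψ (a + v.2) - ψ (a + v.1)) := by
      have h1 := (hasSum_nat_add_iff' (f := fun m : ℕ => p.coeff m * v.2 ^ m - p.coeff m * v.1 ^ m)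
        (g := ψ (a + v.2) - ψ (a + v.1)) 1).2 htot
      simp only [Finset.range_one, Finset.sum_singleton, pow_zero, mul_one, sub_self,
        sub_zero] at h1
      have hfun : (fun n : ℕ => p.coeff (n + 1) * (v.2 ^ (n + 1) - v.1 ^ (n + 1))) =
          fun n : ℕ => p.coeff (n + 1) * v.2 ^ (n + 1) - p.coeff (n + 1) * v.1 ^ (n + 1) :=
        funext fun n => by ring
      rw [hfun]; exact h1
    have hS'' : HasSum (fun n => (v.2 - v.1) * (P n fun _ => v))
        (ψ (a + v.2) - ψ (a + v.1)) := by
      have : (fun n => (v.2 - v.1) * (P n fun _ => v))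
          = fun n : ℕ => p.coeff (n + 1) * (v.2 ^ (n + 1) - v.1 ^ (n + 1)) :=
        funext hterm
      rw [this]
      exact hshift
    exact hS'.unique hS''
  -- G coincides with the sum of the series near (a, a)
  have heq : G =ᶠ[𝓝 ((a : ℂ), (a : ℂ))] (fun q => P.sum (q - (a, a))) := by
    have hball : Metric.ball ((a : ℂ), (a : ℂ)) (r : ℝ) ∈ 𝓝 ((a : ℂ), (a : ℂ)) :=
      Metric.ball_mem_nhds _ hr0'
    filter_upwards [hball] with q hq
    have hqnorm : ‖q - (a, a)‖ < (r : ℝ) := by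
      rwa [Metric.mem_ball, dist_eq_norm] at hq
    obtain ⟨z, w⟩ := q
    have hv1 : ‖z - a‖ < (r : ℝ) := lt_of_le_of_lt (norm_fst_le ((z, w) - (a, a))) hqnorm
    have hv2 : ‖w - a‖ < (r : ℝ) := lt_of_le_of_lt (norm_snd_le ((z, w) - (a, a))) hqnorm
    by_cases hzw : z = w
    · -- diagonal: identify the sum with the derivative of ψ
      subst hzw
      have hcont : ContinuousAt (fun w' : ℂ => P.sum (z - a, w' - a)) z := by
        have hPc : ContinuousAt P.sum ((z : ℂ) - a, (z : ℂ) - a) := by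
          apply (P.continuousOn).continuousAt
          apply EMetric.isOpen_ball.mem_nhds
          rw [EMetric.mem_ball, edist_zero_right]
          calc (‖((z : ℂ) - a, (z : ℂ) - a)‖₊ : ℝ≥0∞) < (r : ℝ≥0∞) := by
                rw [ENNReal.coe_lt_coe]
                exact_mod_cast hqnorm
            _ ≤ P.radius := hrP
        have hin : ContinuousAt (fun w' : ℂ => ((z - a : ℂ), w' - a)) z := by fun_prop
        exact ContinuousAt.comp (f := fun w' : ℂ => ((z - a : ℂ), w' - a)) hPc hin
      have hslope : (fun w' => slope ψ z w') =ᶠ[𝓝[≠] z]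
          (fun w' => P.sum (z - a, w' - a)) := by
        have hballz : ∀ᶠ w' in 𝓝 z, w' ∈ Metric.ball a (r : ℝ) := by
          apply isOpen_ball.eventually_mem
          rw [Metric.mem_ball, dist_eq_norm]
          exact hv1
        filter_upwards [nhdsWithin_le_nhds hballz, self_mem_nhdsWithin] with w' hw' hne
        have hw'r : ‖w' - a‖ < (r : ℝ) := by rwa [Metric.mem_ball, dist_eq_norm] at hw'
        have hvnorm : ‖((z : ℂ) - a, (w' : ℂ) - a)‖ < (r : ℝ) := by
          rw [Prod.norm_def]
          exact max_lt hv1 hw'r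
        have hk := hkey ((z : ℂ) - a, (w' : ℂ) - a) hvnorm
        simp only [add_sub_cancel] at hk
        rw [slope_def_field]
        have hne' : w' - z ≠ 0 := sub_ne_zero.2 hne
        field_simp
        linear_combination -hk
      have hDeriv : HasDerivAt ψ (P.sum ((z : ℂ) - a, (z : ℂ) - a)) z := by
        rw [hasDerivAt_iff_tendsto_slope]
        apply Filter.Tendsto.congr' hslope.symm
        exact (hcont.tendsto).mono_left nhdsWithin_le_nhds
      simp only [hGdef, if_pos rfl]
      rw [hDeriv.deriv]
      rfl
    · -- off diagonal
      simp only [hGdef, if_neg hzw]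
      have hvnorm : ‖((z : ℂ) - a, (w : ℂ) - a)‖ < (r : ℝ) := by
        rw [Prod.norm_def]
        exact max_lt hv1 hv2
      have hk := hkey ((z : ℂ) - a, (w : ℂ) - a) hvnorm
      simp only [add_sub_cancel] at hk
      have hne : w - z ≠ 0 := sub_ne_zero.2 (Ne.symm hzw)
      have : P.sum ((z : ℂ) - a, (w : ℂ) - a) = (ψ w - ψ z) / (w - z) := by
        rw [eq_div_iff hne]
        linear_combination hk
      rw [← this]
      rfl
  -- conclude analyticity
  have hPsum_an : AnalyticAt ℂ P.sum (0 : ℂ × ℂ) := by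
    have hradpos : (0 : ℝ≥0∞) < P.radius := lt_of_lt_of_le (by exact_mod_cast hr0) hrP
    exact (P.hasFPowerSeriesOnBall hradpos).analyticAt
  have htrans : AnalyticAt ℂ (fun q : ℂ × ℂ => P.sum (q - (a, a))) (a, a) := by
    have h1 : AnalyticAt ℂ (fun q : ℂ × ℂ => q - (a, a)) (a, a) :=
      analyticAt_id.sub analyticAt_const
    have h2 : AnalyticAt ℂ P.sum ((fun q : ℂ × ℂ => q - (a, a)) (a, a)) := by
      simpa using hPsum_an
    exact AnalyticAt.comp (g := P.sum) (f := fun q : ℂ × ℂ => q - (a, a)) h2 h1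
  exact htrans.congr heq.symm

/-- If `ψ` is holomorphic and injective on the open ball `B(0,R) ⊆ ℂ`,
then there is a function `H` jointly analytic on `B(0,R) × B(0,R)` with
`H(z,w) = (w - z)/(ψ w - ψ z)` off the diagonal and `H(z,z) = 1/ψ'(z)` on the diagonal. -/
theorem cauchy_kernel_diagonal_removable
    (R : ℝ) (hR : 0 < R) (ψ : ℂ → ℂ)
    (hψ : DifferentiableOn ℂ ψ (Metric.ball 0 R))
    (hinj : Set.InjOn ψ (Metric.ball 0 R)) :
    ∃ H : ℂ × ℂ → ℂ,
      AnalyticOnNhd ℂ H (Metric.ball (0 : ℂ) R ×ˢ Metric.ball (0 : ℂ) R) ∧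
      (∀ z w : ℂ, z ∈ Metric.ball (0 : ℂ) R → w ∈ Metric.ball (0 : ℂ) R → z ≠ w →
        H (z, w) = (w - z) / (ψ w - ψ z)) ∧
      (∀ z ∈ Metric.ball (0 : ℂ) R, H (z, z) = 1 / deriv ψ z) := by
  have hψan : AnalyticOnNhd ℂ ψ (Metric.ball (0 : ℂ) R) := hψ.analyticOnNhd isOpen_ball
  set G : ℂ × ℂ → ℂ := fun p =>
    if p.1 = p.2 then deriv ψ p.1 else (ψ p.2 - ψ p.1) / (p.2 - p.1) with hGdef
  -- G is analytic on the product
  have hGan : AnalyticOnNhd ℂ G (Metric.ball (0 : ℂ) R ×ˢ Metric.ball (0 : ℂ) R) := by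
    rintro ⟨z, w⟩ hzw
    obtain ⟨hz, hw⟩ := Set.mem_prod.1 hzw
    by_cases h : z = w
    · subst h
      exact diag_analytic_aux R ψ hψan hz
    · have hq : AnalyticAt ℂ (fun q : ℂ × ℂ => (ψ q.2 - ψ q.1) / (q.2 - q.1)) (z, w) := by
        apply AnalyticAt.div
        · exact ((hψan w hw).comp analyticAt_snd).sub ((hψan z hz).comp analyticAt_fst)
        · exact analyticAt_snd.sub analyticAt_fst
        · exact sub_ne_zero.2 (Ne.symm h)
      apply hq.congr
      have hopen : IsOpen {q : ℂ × ℂ | q.1 ≠ q.2} :=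
        isOpen_ne_fun continuous_fst continuous_snd
      filter_upwards [hopen.eventually_mem h] with q hq'
      simp only [hGdef, if_neg hq']
  -- G never vanishes on the product
  have hGne : ∀ q ∈ (Metric.ball (0 : ℂ) R ×ˢ Metric.ball (0 : ℂ) R), G q ≠ 0 := by
    rintro ⟨z, w⟩ hzw
    obtain ⟨hz, hw⟩ := Set.mem_prod.1 hzw
    by_cases h : z = w
    · subst h
      simp only [hGdef, if_pos rfl]
      exact deriv_ne_zero_of_injOn_aux R hR ψ hψan hinj hz
    · simp only [hGdef, if_neg h]
      apply div_ne_zero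
      · exact sub_ne_zero.2 fun he => h (hinj hz hw he.symm)
      · exact sub_ne_zero.2 (Ne.symm h)
  refine ⟨fun q => (G q)⁻¹, hGan.inv hGne, ?_, ?_⟩
  · intro z w hz hw hne
    simp only [hGdef, if_neg hne]
    rw [← one_div, one_div_div]
  · intro z hz
    simp only [hGdef, if_pos rfl]
    rw [one_div]
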